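/- Let x̃ : E → ℝ≥0 be edge capacities and let y be the induced tree-edge capacities. Let α ≥ 0, let W ⊆ E be an edge set with x̃(e) ≥ α for every e ∈ W, and let u, v ∈ V be connected in W. Then every tree edge f lying on the unique path in 𝒯 between the leaves M1^{-1}(u) and M1^{-1}(v) satisfies y(f) ≥ α. -/

import Mathlib

open scoped Classical

/-- The edges of `H` with exactly one endpoint in `S` (the cut `δ_H(S)`).
Edges are abstract objects of type `E` with endpoint maps `g₁ g₂ : E → V`. -/
noncomputable def cutEdges {V E : Type*} (g₁ g₂ : E → V) (H : Finset E) (S : Finset V) :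
    Finset E :=
  H.filter fun e => (g₁ e ∈ S) ≠ (g₂ e ∈ S)

/-- `u` and `v` are connected by a path using only edges of `H`. -/
def ConnectedIn {V E : Type*} (g₁ g₂ : E → V) (H : Finset E) (u v : V) : Prop :=
  Relation.ReflTransGen (fun a b => ∃ e ∈ H, (g₁ e = a ∧ g₂ e = b) ∨ (g₁ e = b ∧ g₂ e = a)) u v

/-- `u` and `v` are `p`-edge-connected in `H`: for every `D ⊆ H` with `|D| ≤ p - 1`,
`u` and `v` are connected in `H \ D`. -/
def PEdgeConnected {V E : Type*} (g₁ g₂ : E → V) (p : ℕ) (H : Finset E) (u v : V) : Prop :=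
  ∀ D : Finset E, D ⊆ H → D.card ≤ p - 1 → ConnectedIn g₁ g₂ (H \ D) u v

/-- `u` and `v` are `(p,q)`-flex-connected in `H` (with unsafe edge set `Unsafe`):
for every `U ⊆ Unsafe` with `|U| ≤ q`, `u` and `v` are `p`-edge-connected in `H \ U`. -/
def FlexConnected {V E : Type*} (g₁ g₂ : E → V) (Unsafe : Finset E) (p q : ℕ)
    (H : Finset E) (u v : V) : Prop :=
  ∀ U : Finset E, U ⊆ Unsafe → U.card ≤ q → PEdgeConnected g₁ g₂ p (H \ U) u v

/-- `(t₁, t₂ : TE → TV)` describes a (multi)graph which is a tree: it is connected and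
every edge is a bridge. -/
def IsTree' {TV TE : Type*} [Fintype TE] (t₁ t₂ : TE → TV) : Prop :=
  (∀ a b : TV, ConnectedIn t₁ t₂ Finset.univ a b) ∧
    ∀ f : TE, ¬ ConnectedIn t₁ t₂ (Finset.univ \ {f}) (t₁ f) (t₂ f)

/-- `V_f`: the `M1`-images of the leaves (elements of `L`) lying in the connected component
of the tree with `f` deleted that contains the endpoint `t₁ f`. -/
noncomputable def compVerts {V TV TE : Type*} [Fintype TE] (t₁ t₂ : TE → TV)
    (M1 : TV → V) (L : Finset TV) (f : TE) : Finset V :=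
  (L.filter fun a => ConnectedIn t₁ t₂ (Finset.univ \ {f}) a (t₁ f)).image M1

/-- The capacity `y(f) = Σ_{e ∈ δ_E(V_f)} x(e)` induced on a tree edge `f` by
capacities `x` on the edges of `G`. -/
noncomputable def treeCap {V E TV TE : Type*} [Fintype E] [Fintype TE]
    (g₁ g₂ : E → V) (t₁ t₂ : TE → TV) (M1 : TV → V) (L : Finset TV)
    (x : E → NNReal) (f : TE) : NNReal :=
  ∑ e ∈ cutEdges g₁ g₂ Finset.univ (compVerts t₁ t₂ M1 L f), x e

/-- `M^{-1}(F)`: tree edges `f` with `M2(f) ∩ F ≠ ∅`. -/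
noncomputable def Minv {E TE : Type*} [Fintype TE] (M2 : TE → Finset E) (F : Finset E) :
    Finset TE :=
  Finset.univ.filter fun f => (M2 f ∩ F).Nonempty

/-- `M(E') = ⋃_{f ∈ E'} M2(f)`. -/
noncomputable def Mimg {E TE : Type*} (M2 : TE → Finset E) (E' : Finset TE) : Finset E :=
  E'.biUnion M2

/-- The connected component containing `v` of the graph on `V` with edge set `H`. -/
noncomputable def Qcomp {V E : Type*} [Fintype V] (g₁ g₂ : E → V) (H : Finset E) (v : V) :
    Finset V :=
  Finset.univ.filter fun u => ConnectedIn g₁ g₂ H u v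

/-- A vertex set `Q` is shattered (w.r.t. the tree and `M^{-1}(F)`): the leaves whose
`M1`-images lie in `Q` are not all in a single connected component of the tree with the
edges of `M^{-1}(F)` deleted. -/
def IsShattered {V E TV TE : Type*} [Fintype TE] (t₁ t₂ : TE → TV) (M1 : TV → V)
    (L : Finset TV) (M2 : TE → Finset E) (F : Finset E) (Q : Finset V) : Prop :=
  ∃ a ∈ L, ∃ b ∈ L, M1 a ∈ Q ∧ M1 b ∈ Q ∧
    ¬ ConnectedIn t₁ t₂ (Finset.univ \ Minv M2 F) a b

/-- `Z_F`: the pairs `(A ∪ Q_{s_i}, B ∪ Q_{t_i})` over `i ∈ [k]` and pairs `(A, B)`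
partitioning the union of the shattered components of `(V, H \ F)`, each shattered
component lying entirely in `A` or entirely in `B`, such that the two sets of the pair
are disjoint. -/
def ZF {V E TV TE : Type*} [Fintype V] [Fintype TE] (g₁ g₂ : E → V) (t₁ t₂ : TE → TV)
    (M1 : TV → V) (L : Finset TV) (M2 : TE → Finset E) {k : ℕ} (st : Fin k → V × V)
    (H F : Finset E) : Set (Finset V × Finset V) :=
  { P | ∃ i : Fin k, ∃ A B : Finset V,
      Disjoint A B ∧
      A ∪ B = Finset.univ.filter
        (fun v => IsShattered t₁ t₂ M1 L M2 F (Qcomp g₁ g₂ (H \ F) v)) ∧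
      (∀ v : V, IsShattered t₁ t₂ M1 L M2 F (Qcomp g₁ g₂ (H \ F) v) →
        Qcomp g₁ g₂ (H \ F) v ⊆ A ∨ Qcomp g₁ g₂ (H \ F) v ⊆ B) ∧
      P.1 = A ∪ Qcomp g₁ g₂ (H \ F) (st i).1 ∧
      P.2 = B ∪ Qcomp g₁ g₂ (H \ F) (st i).2 ∧
      Disjoint P.1 P.2 }

/-- The number of shattered connected components of `(V, H \ F)`. -/
noncomputable def shatteredCount {V E TV TE : Type*} [Fintype V] [Fintype TE]
    (g₁ g₂ : E → V) (t₁ t₂ : TE → TV) (M1 : TV → V) (L : Finset TV)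
    (M2 : TE → Finset E) (H F : Finset E) : ℕ :=
  ((Finset.univ.image fun v => Qcomp g₁ g₂ (H \ F) v).filter
    fun Q => IsShattered t₁ t₂ M1 L M2 F Q).card

lemma connectedIn_symm {V E : Type*} (g₁ g₂ : E → V) (H : Finset E) {u v : V}
    (h : ConnectedIn g₁ g₂ H u v) : ConnectedIn g₁ g₂ H v u :=
  (@Relation.ReflTransGen.stdSymm _ _ ⟨fun _ _ ⟨e, he, h⟩ => ⟨e, he, h.symm⟩⟩).symm _ _ h

lemma exists_cut_edge {V E : Type*} (g₁ g₂ : E → V) (H : Finset E) (S : Finset V)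
    {u v : V} (h : ConnectedIn g₁ g₂ H u v) (hu : u ∈ S) (hv : v ∉ S) :
    ∃ e ∈ H, (g₁ e ∈ S) ≠ (g₂ e ∈ S) := by
  revert hv
  induction h with
  | refl => intro hv; exact absurd hu hv
  | @tail b c hab hbc ih =>
    intro hc
    by_cases hbS : b ∈ S
    · obtain ⟨e, he, hor⟩ := hbc
      refine ⟨e, he, ?_⟩
      rcases hor with ⟨h1, h2⟩ | ⟨h1, h2⟩ <;> subst h1 <;> subst h2 <;> simp [hbS, hc]
    · exact ih hbS

lemma cut_sum_ge {V E : Type*} [Fintype E] (g₁ g₂ : E → V) (x : E → NNReal) (α : NNReal)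
    (W : Finset E) (hW : ∀ e ∈ W, α ≤ x e) {u v : V} (S : Finset V)
    (huv : ConnectedIn g₁ g₂ W u v) (hu : u ∈ S) (hv : v ∉ S) :
    α ≤ ∑ e ∈ cutEdges g₁ g₂ Finset.univ S, x e := by
  obtain ⟨e, he, hcut⟩ := exists_cut_edge g₁ g₂ W S huv hu hv
  have he' : e ∈ cutEdges g₁ g₂ Finset.univ S := by
    simp only [cutEdges, Finset.mem_filter, Finset.mem_univ, true_and]
    exact hcut
  exact le_trans (hW e he) (Finset.single_le_sum (fun i _ => zero_le) he')

lemma reach_side {TV TE : Type*} [Fintype TE] (t₁ t₂ : TE → TV) (f : TE) {c : TV}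
    (hconn : ConnectedIn t₁ t₂ Finset.univ (t₁ f) c) :
    ConnectedIn t₁ t₂ (Finset.univ \ {f}) c (t₁ f) ∨
    ConnectedIn t₁ t₂ (Finset.univ \ {f}) c (t₂ f) := by
  induction hconn with
  | refl => exact Or.inl .refl
  | @tail b c hab hbc ih =>
    obtain ⟨e, _, hor⟩ := hbc
    by_cases hef : e = f
    · subst hef
      rcases hor with ⟨h1, h2⟩ | ⟨h1, h2⟩
      · subst h2; exact Or.inr .refl
      · subst h1; exact Or.inl .refl
    · have hcb : ConnectedIn t₁ t₂ (Finset.univ \ {f}) c b :=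
        Relation.ReflTransGen.single ⟨e, by simp [hef], by tauto⟩
      rcases ih with h | h
      · exact Or.inl (hcb.trans h)
      · exact Or.inr (hcb.trans h)

/-- If `u, v ∈ V` are connected in an edge set `W` all of whose edges have capacity at
least `α`, then every tree edge `f` on the unique tree path between the leaves mapped to
`u` and `v` (i.e. every `f` whose deletion disconnects those leaves) has induced
capacity `y(f) ≥ α`. -/
theorem treeCap_ge_of_connected {V E TV TE : Type*} [Fintype V] [Fintype E] [Fintype TE]
    (g₁ g₂ : E → V) (t₁ t₂ : TE → TV) (htree : IsTree' t₁ t₂)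
    (M1 : TV → V) (L : Finset TV) (hM1 : Set.BijOn M1 (↑L) Set.univ)
    (x : E → NNReal) (α : NNReal) (W : Finset E) (hW : ∀ e ∈ W, α ≤ x e)
    (u v : V) (huv : ConnectedIn g₁ g₂ W u v)
    (f : TE) (a b : TV) (ha : a ∈ L) (hb : b ∈ L) (hau : M1 a = u) (hbv : M1 b = v)
    (hf : ¬ ConnectedIn t₁ t₂ (Finset.univ \ {f}) a b) :
    α ≤ treeCap g₁ g₂ t₁ t₂ M1 L x f := by
  obtain ⟨hconn, hbridge⟩ := htree
  have hbf := hbridge f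
  have ra := reach_side t₁ t₂ f (hconn (t₁ f) a)
  have rb := reach_side t₁ t₂ f (hconn (t₁ f) b)
  set S := compVerts t₁ t₂ M1 L f with hS
  -- membership characterization
  have hmem : ∀ c ∈ L, ConnectedIn t₁ t₂ (Finset.univ \ {f}) c (t₁ f) → M1 c ∈ S := by
    intro c hc hcf
    exact Finset.mem_image_of_mem M1 (Finset.mem_filter.mpr ⟨hc, hcf⟩)
  have hnot : ∀ c ∈ L, ConnectedIn t₁ t₂ (Finset.univ \ {f}) c (t₂ f) → M1 c ∉ S := by
    intro c hc hcf hmemS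
    obtain ⟨d, hd, hdc⟩ := Finset.mem_image.mp hmemS
    have hd' := Finset.mem_filter.mp hd
    have : d = c := hM1.2.1 (by exact_mod_cast hd'.1) (by exact_mod_cast hc) hdc
    subst this
    exact hbf ((connectedIn_symm _ _ _ hd'.2).trans hcf)
  rcases ra with ra | ra <;> rcases rb with rb | rb
  · exact absurd (ra.trans (connectedIn_symm _ _ _ rb)) hf
  · -- a on t₁ side, b on t₂ side : u ∈ S, v ∉ S
    have hu : u ∈ S := hau ▸ hmem a ha ra
    have hv : v ∉ S := hbv ▸ hnot b hb rb
    exact cut_sum_ge g₁ g₂ x α W hW S huv hu hv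
  · -- a on t₂ side, b on t₁ side : v ∈ S, u ∉ S
    have hv : v ∈ S := hbv ▸ hmem b hb rb
    have hu : u ∉ S := hau ▸ hnot a ha ra
    exact cut_sum_ge g₁ g₂ x α W hW S (connectedIn_symm _ _ _ huv) hv hu
  · exact absurd (ra.trans (connectedIn_symm _ _ _ rb)) hf
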